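/- For every real ε with 0 < ε < 27/16, there exists p₀ such that for every integer p ≥ p₀ one has C(4p, 2p) / (4 · C(4p, p−1)) ≥ (27/16 − ε)^p, where C(n,k) denotes the binomial coefficient and the quotient is taken in the real numbers. -/
import Mathlib

noncomputable def auxF (p : ℕ) : ℝ := ((3*p).factorial * p.factorial : ℝ) / ((2*p).factorial)^2

lemma auxF_pos (p : ℕ) : 0 < auxF p := by
  unfold auxF
  positivity

lemma auxF_succ (p : ℕ) : auxF (p+1) = auxF p * (3*(3*(p:ℝ)+1)*(3*p+2)) / (4*(2*p+1)^2) := by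
  unfold auxF
  have h1 : (3*(p+1)).factorial = (3*p+3)*((3*p+2)*((3*p+1)*(3*p).factorial)) := by
    rw [show 3*(p+1) = (3*p+2)+1 by ring, Nat.factorial_succ,
      show 3*p+2 = (3*p+1)+1 by ring, Nat.factorial_succ,
      show (3*p+1) = (3*p)+1 from rfl, Nat.factorial_succ]
  have h2 : (2*(p+1)).factorial = (2*p+2)*((2*p+1)*(2*p).factorial) := by
    rw [show 2*(p+1) = (2*p+1)+1 by ring, Nat.factorial_succ, Nat.factorial_succ]
  have h3 : (p+1).factorial = (p+1)*p.factorial := Nat.factorial_succ p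
  rw [h1, h2, h3]
  have e1 : ((2*p).factorial : ℝ) ≠ 0 := by positivity
  have e2 : ((2:ℝ)*p+1) ≠ 0 := by positivity
  have e3 : ((2:ℝ)*p+2) ≠ 0 := by positivity
  push_cast
  field_simp
  ring

lemma auxChoose (p : ℕ) :
    ((4*p).choose (2*p) : ℝ) / ((4*p).choose p) = auxF p := by
  have h1 := Nat.choose_mul_factorial_mul_factorial (show 2*p ≤ 4*p by omega)
  have h2 := Nat.choose_mul_factorial_mul_factorial (show p ≤ 4*p by omega)
  have e1 : (4*p) - 2*p = 2*p := by omega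
  have e2 : (4*p) - p = 3*p := by omega
  rw [e1] at h1; rw [e2] at h2
  have h1' : ((4*p).choose (2*p) : ℝ) * (2*p).factorial * (2*p).factorial = (4*p).factorial := by
    exact_mod_cast congrArg (Nat.cast : ℕ → ℝ) h1
  have h2' : ((4*p).choose p : ℝ) * p.factorial * (3*p).factorial = (4*p).factorial := by
    exact_mod_cast congrArg (Nat.cast : ℕ → ℝ) h2
  have c2 : ((4*p).choose p : ℝ) ≠ 0 := by
    exact_mod_cast (Nat.choose_pos (show p ≤ 4*p by omega)).ne'
  have f1 : ((2*p).factorial : ℝ) ≠ 0 := by positivity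
  have f2 : (p.factorial : ℝ) ≠ 0 := by positivity
  have f3 : ((3*p).factorial : ℝ) ≠ 0 := by positivity
  unfold auxF
  field_simp
  nlinarith [h1', h2']

theorem choose_ratio_exponential_lower_bound (ε : ℝ) (hε : 0 < ε) (hε' : ε < 27 / 16) :
    ∃ p₀ : ℕ, ∀ p : ℕ, p₀ ≤ p →
      (27 / 16 - ε) ^ p ≤ ((4 * p).choose (2 * p) : ℝ) / (4 * ((4 * p).choose (p - 1))) := by
  set s : ℝ := 27/16 - ε with hs_def
  set r : ℝ := 27/16 - ε/2 with hr_def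
  have hs : 0 < s := by simp [hs_def]; linarith
  have hr : 0 < r := by simp [hr_def]; linarith
  have hsr : s < r := by simp [hs_def, hr_def]; linarith
  obtain ⟨N₁, hN₁⟩ := exists_nat_ge (3/ε)
  -- recurrence bound
  have hrec : ∀ p : ℕ, N₁ ≤ p → r * auxF p ≤ auxF (p+1) := by
    intro p hp
    rw [auxF_succ]
    have hpcast : (3:ℝ)/ε ≤ p := hN₁.trans (Nat.cast_le.mpr hp)
    have h3 : 3 ≤ ε * p := by
      rw [div_le_iff₀ hε] at hpcast; linarith [mul_comm ε (p:ℝ)]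
    have hq : r ≤ (3*(3*(p:ℝ)+1)*(3*p+2)) / (4*(2*p+1)^2) := by
      rw [le_div_iff₀ (by positivity), hr_def]
      have hp0 : (0:ℝ) ≤ p := Nat.cast_nonneg p
      nlinarith [mul_nonneg hε.le (sq_nonneg (p:ℝ))]
    rw [mul_div_assoc]
    calc r * auxF p = auxF p * r := mul_comm _ _
      _ ≤ auxF p * ((3*(3*(p:ℝ)+1)*(3*p+2)) / (4*(2*p+1)^2)) :=
          mul_le_mul_of_nonneg_left hq (auxF_pos p).le
  -- growth
  have hgrow : ∀ p : ℕ, N₁ ≤ p → auxF N₁ * r^(p - N₁) ≤ auxF p := by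
    intro p hp
    induction p, hp using Nat.le_induction with
    | base => simp
    | succ n hn ih =>
      have h1 : n + 1 - N₁ = (n - N₁) + 1 := by omega
      rw [h1, pow_succ, ← mul_assoc]
      calc auxF N₁ * r^(n-N₁) * r ≤ auxF n * r := by
            apply mul_le_mul_of_nonneg_right ih hr.le
        _ = r * auxF n := mul_comm _ _
        _ ≤ auxF (n+1) := hrec n hn
  have ht : (1:ℝ) < r / s := (one_lt_div hs).mpr hsr
  obtain ⟨N₂, hN₂⟩ := pow_unbounded_of_one_lt (4 * r^N₁ / auxF N₁) ht
  refine ⟨max (max N₁ N₂) 1, fun p hp => ?_⟩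
  have hpN₁ : N₁ ≤ p := le_trans (le_trans (le_max_left _ _) (le_max_left _ _)) hp
  have hpN₂ : N₂ ≤ p := le_trans (le_trans (le_max_right _ _) (le_max_left _ _)) hp
  have hp1 : 1 ≤ p := le_trans (le_max_right _ _) hp
  have htp : 4 * r^N₁ / auxF N₁ < (r/s)^p :=
    lt_of_lt_of_le hN₂ (pow_le_pow_right₀ ht.le hpN₂)
  rw [div_pow] at htp
  have h1 := (div_lt_div_iff₀ (auxF_pos N₁) (pow_pos hs p)).mp htp
  have hrp : r^p = r^N₁ * r^(p - N₁) := by rw [← pow_add]; congr 1; omega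
  rw [hrp] at h1
  have key : 4 * s^p < auxF N₁ * r^(p - N₁) := by
    nlinarith [pow_pos hr N₁, pow_pos hs p, pow_pos hr (p - N₁), auxF_pos N₁]
  have key2 : s^p ≤ auxF p / 4 := by
    have := hgrow p hpN₁
    linarith
  have hcpos : 0 < ((4*p).choose (p-1) : ℝ) := by
    exact_mod_cast Nat.choose_pos (show p - 1 ≤ 4*p by omega)
  have hmono : ((4*p).choose (p-1) : ℝ) ≤ ((4*p).choose p) := by
    have h := Nat.choose_le_succ_of_lt_half_left (show p - 1 < 4*p/2 by omega)
    have h2 : p - 1 + 1 = p := by omega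
    rw [h2] at h
    exact_mod_cast h
  calc s^p ≤ auxF p / 4 := key2
    _ = ((4*p).choose (2*p) : ℝ) / ((4*p).choose p) / 4 := by rw [auxChoose]
    _ = ((4*p).choose (2*p) : ℝ) / (4 * ((4*p).choose p)) := by
        ring
    _ ≤ ((4*p).choose (2*p) : ℝ) / (4 * ((4*p).choose (p-1))) := by
        gcongr
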